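/- Theorem 1 (part 2): Let J be an ideal of A_n and let z be a nonzero element of J with period n_z. Let r_z be the least positive integer such that x^{r_z}·z = α·z in A_n for some α ∈ GF(q)^*, and let d_z = n_z / r_z. Then the cycle {x^j·z : 0 ≤ j ≤ n_z − 1} of z meets exactly r_z distinct proportionality classes, namely P_z, P_{x·z}, …, P_{x^{r_z−1}·z}, and each of these classes contains exactly d_z elements of the cycle. -/

import Mathlib

open Polynomial

namespace CyclicCode

open scoped Classical

variable (F : Type) [Field F] [Fintype F]

/-- The ambient algebra `A_n = GF(q)[x]/(x^n - 1)`. -/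
abbrev An (n : ℕ) := AdjoinRoot (X ^ n - 1 : F[X])

/-- The image of `x` in `A_n`. -/
noncomputable def xbar (n : ℕ) : An F n := AdjoinRoot.root _

variable {F}

/-- The proportionality class `P_z = {α • z : α ∈ GF(q)^*}` of `z`. -/
def propClass {n : ℕ} (z : An F n) : Set (An F n) :=
  {w | ∃ α : F, α ≠ 0 ∧ w = α • z}

/-- The cycle `{x^j • z : j}` of `z`. -/
noncomputable def cyc {n : ℕ} (z : An F n) : Set (An F n) :=
  {w | ∃ j : ℕ, w = xbar F n ^ j * z}

/-- The period of `z`: the least positive `e` with `x^e * z = z`. -/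
noncomputable def period {n : ℕ} (z : An F n) : ℕ :=
  sInf {e : ℕ | 0 < e ∧ xbar F n ^ e * z = z}

/-- The order of a polynomial `f`: the least positive `e` with `f ∣ X^e - 1`. -/
noncomputable def polyOrder {F : Type} [Field F] (f : F[X]) : ℕ :=
  sInf {e : ℕ | 0 < e ∧ f ∣ X ^ e - 1}

/-- The representative of degree `< n` of an element of `A_n`. -/
noncomputable def rep {n : ℕ} (z : An F n) : F[X] :=
  if h : (X ^ n - 1 : F[X]).Monic then AdjoinRoot.modByMonicHom h z else 0

/-- The Hamming weight of an element of `A_n`. -/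
noncomputable def wt {n : ℕ} (z : An F n) : ℕ := (rep z).support.card

/-- `c` is the minimal polynomial of `z ∈ A_n`: a polynomial annihilates `z`
iff it is a multiple of `c`. -/
def HasMinPoly {n : ℕ} (z : An F n) (c : F[X]) : Prop :=
  ∀ f : F[X], AdjoinRoot.mk (X ^ n - 1 : F[X]) f * z = 0 ↔ c ∣ f

/-- The cyclic code of length `n` with parity-check polynomial `h`:
the ideal of `A_n` generated by `(X^n - 1)/h`. -/
noncomputable def code (F : Type) [Field F] (n : ℕ) (h : F[X]) : Ideal (An F n) :=
  Ideal.span {AdjoinRoot.mk (X ^ n - 1 : F[X]) ((X ^ n - 1) / h)}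

/-- The proportionality classes meeting a set `C`. -/
def classesOf {n : ℕ} (C : Set (An F n)) : Set (Set (An F n)) :=
  {P | ∃ z ∈ C, P = propClass z}

/-- The cycles meeting a set `C`. -/
noncomputable def cyclesOf {n : ℕ} (C : Set (An F n)) : Set (Set (An F n)) :=
  {S | ∃ z ∈ C, S = cyc z}

/-- The minimum Hamming distance of a linear code `J ⊆ A_n`. -/
noncomputable def minDist {n : ℕ} (J : Ideal (An F n)) : ℕ :=
  sInf {k : ℕ | ∃ z ∈ J, z ≠ 0 ∧ wt z = k}

/-- The multiplicative order of `q` modulo `n`. -/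
noncomputable def multOrder (q n : ℕ) : ℕ :=
  sInf {e : ℕ | 0 < e ∧ q ^ e ≡ 1 [MOD n]}


/-- Theorem 1, part 2: under the hypotheses of Theorem 1, with
`d_z = n_z / r_z`, the cycle of `z` meets exactly `r_z` distinct proportionality
classes, namely `P_z, P_{x·z}, …, P_{x^{r_z - 1}·z}`, and each of these classes
contains exactly `d_z` elements of the cycle. -/
theorem stmt3 {F : Type} [Field F] [Fintype F] (q n : ℕ)
    (hcard : Fintype.card F = q) (hq : 2 < q) (hn : 0 < n) (hco : Nat.Coprime n q)
    (J : Ideal (An F n)) (z : An F n) (hzJ : z ∈ J) (hz : z ≠ 0)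
    (r : ℕ) (α : F) (hr : 0 < r) (hα : α ≠ 0)
    (heq : xbar F n ^ r * z = α • z)
    (hmin : ∀ e : ℕ, 0 < e → (∃ β : F, β ≠ 0 ∧ xbar F n ^ e * z = β • z) → r ≤ e) :
    classesOf (cyc z) = {P : Set (An F n) | ∃ j < r, P = propClass (xbar F n ^ j * z)} ∧
    Set.ncard (classesOf (cyc z)) = r ∧
    (∀ w ∈ cyc z, (propClass w ∩ cyc z).ncard = period z / r) := by
  classical
  haveI : Nontrivial (An F n) := nontrivial_of_ne z 0 hz
  haveI : NoZeroSMulDivisors F (An F n) := ⟨fun {c x} h => by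
    by_cases hc : c = 0
    · exact Or.inl hc
    · refine Or.inr ?_
      calc x = c⁻¹ • (c • x) := by rw [smul_smul, inv_mul_cancel₀ hc, one_smul]
        _ = 0 := by rw [h, smul_zero]⟩
  have hXn : xbar F n ^ n = 1 := by
    have h0 : AdjoinRoot.mk (X ^ n - 1 : F[X]) (X ^ n - 1) = 0 := AdjoinRoot.mk_self
    rw [map_sub, map_pow, map_one, AdjoinRoot.mk_X, sub_eq_zero] at h0
    exact h0
  have hsc : ∀ β γ : F, β • z = γ • z → β = γ := by
    intro β γ h
    have h2 : (β - γ) • z = 0 := by rw [sub_smul, h, sub_self]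
    rcases smul_eq_zero.mp h2 with h3 | h3
    · exact sub_eq_zero.mp h3
    · exact absurd h3 hz
  -- Lemma A: x^(r*m) z = α^m • z
  have hA : ∀ m : ℕ, xbar F n ^ (r * m) * z = (α ^ m) • z := by
    intro m
    induction m with
    | zero => simp
    | succ m ih =>
      have h1 : r * (m + 1) = r * m + r := by ring
      rw [h1, pow_add, mul_assoc, heq, mul_smul_comm, ih, smul_smul]
      rw [pow_succ, mul_comm α (α ^ m)]
  -- Lemma B: x^e z = β • z with β ≠ 0 implies r ∣ e
  have hB : ∀ e : ℕ, ∀ β : F, β ≠ 0 → xbar F n ^ e * z = β • z → r ∣ e := by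
    intro e β hβ hEq
    rcases Nat.eq_zero_or_pos (e % r) with hs | hs
    · exact Nat.dvd_of_mod_eq_zero hs
    · exfalso
      have hαq : (α : F) ^ (e / r) ≠ 0 := pow_ne_zero _ hα
      have h1 : xbar F n ^ e * z = (α ^ (e / r)) • (xbar F n ^ (e % r) * z) := by
        conv_lhs => rw [← Nat.div_add_mod e r, pow_add]
        rw [show xbar F n ^ (r * (e / r)) * xbar F n ^ (e % r) * z
              = xbar F n ^ (e % r) * (xbar F n ^ (r * (e / r)) * z) by ring,
            hA, mul_smul_comm]
      have h3 : (α ^ (e / r)) • (xbar F n ^ (e % r) * z) = β • z := h1.symm.trans hEq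
      have h2 : xbar F n ^ (e % r) * z = ((α ^ (e / r))⁻¹ * β) • z := by
        calc xbar F n ^ (e % r) * z
            = (α ^ (e / r))⁻¹ • ((α ^ (e / r)) • (xbar F n ^ (e % r) * z)) := by
              rw [smul_smul, inv_mul_cancel₀ hαq, one_smul]
          _ = (α ^ (e / r))⁻¹ • (β • z) := by rw [h3]
          _ = ((α ^ (e / r))⁻¹ * β) • z := by rw [smul_smul]
      have := hmin (e % r) hs ⟨_, mul_ne_zero (inv_ne_zero hαq) hβ, h2⟩
      exact absurd this (not_le.mpr (Nat.mod_lt e hr))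
  have hrn : r ∣ n := hB n 1 one_ne_zero (by rw [hXn, one_mul, one_smul])
  -- the period
  have hα1 : α ^ orderOf (Units.mk0 α hα) = 1 := by
    have h := pow_orderOf_eq_one (Units.mk0 α hα)
    have h2 := congrArg Units.val h
    rw [Units.val_pow_eq_pow_val, Units.val_mk0, Units.val_one] at h2
    exact h2
  have hperiod_mem : 0 < period z ∧ xbar F n ^ (period z) * z = z := by
    have hne : (r * orderOf (Units.mk0 α hα)) ∈ {e : ℕ | 0 < e ∧ xbar F n ^ e * z = z} :=
      ⟨Nat.mul_pos hr (orderOf_pos _), by rw [hA, hα1, one_smul]⟩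
    exact Nat.sInf_mem ⟨_, hne⟩
  have hmin_e : ∀ k, 0 < k → xbar F n ^ k * z = z → period z ≤ k := by
    intro k hk h
    exact Nat.sInf_le ⟨hk, h⟩
  set e := period z with hedef
  have hre : r ∣ e := hB e 1 one_ne_zero (by rw [one_smul]; exact hperiod_mem.2)
  set d := e / r with hddef
  have hed : e = r * d := (Nat.mul_div_cancel' hre).symm
  have hd0 : 0 < d := by
    have := hperiod_mem.1
    rcases Nat.eq_zero_or_pos d with h | h
    · rw [h, Nat.mul_zero] at hed; omega
    · exact h
  -- periodicity
  have hP0 : ∀ m s : ℕ, xbar F n ^ (e * m + s) * z = xbar F n ^ s * z := by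
    intro m s
    induction m with
    | zero => simp
    | succ m ih =>
      have h1 : e * (m + 1) + s = (e * m + s) + e := by ring
      rw [h1, pow_add, mul_assoc, hperiod_mem.2, ih]
  have hper : ∀ k, xbar F n ^ k * z = xbar F n ^ (k % e) * z := by
    intro k
    conv_lhs => rw [← Nat.div_add_mod k e]
    exact hP0 (k / e) (k % e)
  -- injectivity on [0, e)
  have hinj : ∀ k l, k < e → l < e → xbar F n ^ k * z = xbar F n ^ l * z → k = l := by
    have key : ∀ k l, k < e → l < e → k ≤ l → xbar F n ^ k * z = xbar F n ^ l * z → k = l := by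
      intro k l hk hl hkl hEq
      by_contra hne
      have hlt : k < l := lt_of_le_of_ne hkl hne
      have h1 : xbar F n ^ (e - l + k) * z = z := by
        have h2 : xbar F n ^ (e - l) * (xbar F n ^ k * z) = xbar F n ^ (e - l + k) * z := by
          rw [← mul_assoc, ← pow_add]
        have h3 : xbar F n ^ (e - l) * (xbar F n ^ l * z) = z := by
          rw [← mul_assoc, ← pow_add, Nat.sub_add_cancel hl.le, hperiod_mem.2]
        rw [← h2, hEq, h3]
      have := hmin_e (e - l + k) (by omega) h1
      omega
    intro k l hk hl hEq
    rcases le_total k l with h | h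
    · exact key k l hk hl h hEq
    · exact (key l k hl hk h hEq.symm).symm
  -- proportionality relation
  have hrelF : ∀ k l : ℕ, ∀ β : F, β ≠ 0 → xbar F n ^ k * z = β • (xbar F n ^ l * z) →
      k ≡ l [MOD r] := by
    intro k l β hβ hEq
    have h1 : xbar F n ^ ((n - 1) * l + k) * z = β • z := by
      have h2 : xbar F n ^ ((n - 1) * l) * (xbar F n ^ k * z)
          = xbar F n ^ ((n - 1) * l + k) * z := by rw [← mul_assoc, ← pow_add]
      have hnl : (n - 1) * l + l = n * l := by
        have : n - 1 + 1 = n := Nat.succ_pred_eq_of_pos hn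
        calc (n - 1) * l + l = (n - 1 + 1) * l := by ring
          _ = n * l := by rw [this]
      have h3 : xbar F n ^ ((n - 1) * l) * (β • (xbar F n ^ l * z)) = β • z := by
        rw [mul_smul_comm, ← mul_assoc, ← pow_add, hnl, pow_mul, hXn, one_pow, one_mul]
      rw [← h2, hEq, h3]
    have hdvd1 : r ∣ (n - 1) * l + k := hB _ β hβ h1
    have hdvd2 : r ∣ n * l := Dvd.dvd.mul_right hrn l
    have h4 : (r : ℤ) ∣ (((n - 1) * l + k : ℕ) : ℤ) := Int.natCast_dvd_natCast.mpr hdvd1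
    have h5 : (r : ℤ) ∣ ((n * l : ℕ) : ℤ) := Int.natCast_dvd_natCast.mpr hdvd2
    have h6 : (r : ℤ) ∣ ((l : ℤ) - (k : ℤ)) := by
      have hc : ((l : ℤ) - (k : ℤ)) = ((n * l : ℕ) : ℤ) - (((n - 1) * l + k : ℕ) : ℤ) := by
        push_cast [Nat.cast_sub hn]
        ring
      rw [hc]
      exact dvd_sub h5 h4
    exact (Nat.modEq_iff_dvd).mpr h6
  have hrelB : ∀ k l : ℕ, k ≡ l [MOD r] →
      ∃ β : F, β ≠ 0 ∧ xbar F n ^ k * z = β • (xbar F n ^ l * z) := by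
    have key : ∀ k l, l ≤ k → k ≡ l [MOD r] →
        ∃ β : F, β ≠ 0 ∧ xbar F n ^ k * z = β • (xbar F n ^ l * z) := by
      intro k l hlk hmod
      obtain ⟨m, hm⟩ : r ∣ k - l := (Nat.modEq_iff_dvd' hlk).mp hmod.symm
      have hk : k = r * m + l := by omega
      refine ⟨α ^ m, pow_ne_zero _ hα, ?_⟩
      rw [hk, pow_add, mul_assoc,
        show xbar F n ^ (r * m) * (xbar F n ^ l * z)
          = xbar F n ^ l * (xbar F n ^ (r * m) * z) by ring,
        hA, mul_smul_comm]
    intro k l h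
    rcases le_total l k with hlk | hkl
    · exact key k l hlk h
    · obtain ⟨β, hβ, hEq⟩ := key l k hkl h.symm
      exact ⟨β⁻¹, inv_ne_zero hβ, by rw [hEq, smul_smul, inv_mul_cancel₀ hβ, one_smul]⟩
  -- class equality criterion
  have hclass : ∀ k l : ℕ,
      propClass (xbar F n ^ k * z) = propClass (xbar F n ^ l * z) ↔ k ≡ l [MOD r] := by
    intro k l
    constructor
    · intro hP
      have hmem : xbar F n ^ k * z ∈ propClass (xbar F n ^ l * z) := by
        rw [← hP]
        exact ⟨1, one_ne_zero, by rw [one_smul]⟩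
      obtain ⟨β, hβ, hEq⟩ := hmem
      exact hrelF k l β hβ hEq
    · intro h
      obtain ⟨β, hβ, hEq⟩ := hrelB k l h
      ext w
      constructor
      · rintro ⟨γ, hγ, rfl⟩
        exact ⟨γ * β, mul_ne_zero hγ hβ, by rw [hEq, smul_smul]⟩
      · rintro ⟨γ, hγ, rfl⟩
        refine ⟨γ * β⁻¹, mul_ne_zero hγ (inv_ne_zero hβ), ?_⟩
        rw [hEq, smul_smul, mul_assoc, inv_mul_cancel₀ hβ, mul_one]
  -- Goal 1
  have goal1 : classesOf (cyc z)
      = {P : Set (An F n) | ∃ j < r, P = propClass (xbar F n ^ j * z)} := by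
    ext P
    simp only [classesOf, cyc, Set.mem_setOf_eq]
    constructor
    · rintro ⟨w, ⟨j, rfl⟩, rfl⟩
      exact ⟨j % r, Nat.mod_lt j hr, ((hclass j (j % r)).mpr (Nat.mod_modEq j r).symm)⟩
    · rintro ⟨j, hj, rfl⟩
      exact ⟨xbar F n ^ j * z, ⟨j, rfl⟩, rfl⟩
  refine ⟨goal1, ?_, ?_⟩
  -- Goal 2
  · have hstep : {P : Set (An F n) | ∃ j < r, P = propClass (xbar F n ^ j * z)}
        = ↑((Finset.range r).image (fun j => propClass (xbar F n ^ j * z))) := by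
      ext P
      simp only [Finset.coe_image, Finset.coe_range, Set.mem_image, Set.mem_Iio,
        Set.mem_setOf_eq]
      constructor
      · rintro ⟨j, hj, rfl⟩; exact ⟨j, hj, rfl⟩
      · rintro ⟨j, hj, rfl⟩; exact ⟨j, hj, rfl⟩
    rw [goal1, hstep, Set.ncard_coe_finset,
      Finset.card_image_of_injOn, Finset.card_range]
    intro i hi j hj hEq
    simp only [Finset.coe_range, Set.mem_Iio] at hi hj
    have h2 : i % r = j % r := (hclass i j).mp hEq
    rwa [Nat.mod_eq_of_lt hi, Nat.mod_eq_of_lt hj] at h2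
  -- Goal 3
  · rintro w ⟨j, rfl⟩
    have hset : propClass (xbar F n ^ j * z) ∩ cyc z
        = ↑(((Finset.range e).filter (fun k => k % r = j % r)).image
            (fun k => xbar F n ^ k * z)) := by
      ext w'
      simp only [Set.mem_inter_iff, Finset.coe_image, Set.mem_image, Finset.mem_coe,
        Finset.mem_filter, Finset.mem_range, cyc, Set.mem_setOf_eq]
      constructor
      · rintro ⟨hPm, k, rfl⟩
        obtain ⟨β, hβ, hEq⟩ := hPm
        have hE2 : xbar F n ^ (k % e) * z = β • (xbar F n ^ j * z) := by
          rw [← hper k]; exact hEq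
        have hmod : k % e ≡ j [MOD r] := hrelF _ j β hβ hE2
        exact ⟨k % e, ⟨Nat.mod_lt k hperiod_mem.1, hmod⟩, (hper k).symm⟩
      · rintro ⟨k, ⟨hk, hkr⟩, rfl⟩
        constructor
        · obtain ⟨β, hβ, hEq⟩ := hrelB k j hkr
          exact ⟨β, hβ, hEq⟩
        · exact ⟨k, rfl⟩
    have hinjOn : Set.InjOn (fun k => xbar F n ^ k * z)
        ↑((Finset.range e).filter (fun k => k % r = j % r)) := by
      intro a ha b hb hab
      simp only [Finset.coe_filter, Finset.mem_range, Set.mem_setOf_eq] at ha hb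
      exact hinj a b ha.1 hb.1 hab
    have hcardfilter :
        ((Finset.range e).filter (fun k => k % r = j % r)).card = d := by
      rw [← Finset.card_range d]
      symm
      apply Finset.card_bij (fun m _ => j % r + m * r)
      · intro m hm
        simp only [Finset.mem_range] at hm
        simp only [Finset.mem_filter, Finset.mem_range]
        constructor
        · have h1 : j % r < r := Nat.mod_lt j hr
          calc j % r + m * r < r + m * r := by omega
            _ = (m + 1) * r := by ring
            _ ≤ d * r := Nat.mul_le_mul_right r hm
            _ = r * d := mul_comm _ _
            _ = e := hed.symm
        · rw [Nat.add_mul_mod_self_right, Nat.mod_mod_of_dvd j (dvd_refl r)]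
      · intro a ha b hb hEq
        have : a * r = b * r := by omega
        exact Nat.eq_of_mul_eq_mul_right hr this
      · intro k hk
        simp only [Finset.mem_filter, Finset.mem_range] at hk
        refine ⟨k / r, ?_, ?_⟩
        · simp only [Finset.mem_range]
          rw [Nat.div_lt_iff_lt_mul hr]
          calc k < e := hk.1
            _ = r * d := hed
            _ = d * r := mul_comm _ _
        · have h1 := Nat.div_add_mod k r
          have h2 : k / r * r = r * (k / r) := mul_comm _ _
          omega
    rw [hset, Set.ncard_coe_finset, Finset.card_image_of_injOn hinjOn, hcardfilter]


end CyclicCode
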